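/- If φ₁ and φ₂ are both functions from [0,1/2] to ℝ that are continuously differentiable on [0,1/2], three times continuously differentiable on (0,1/2), positive on (0,1/2), and satisfy φᵢ(0) = φᵢ(1/2) = 0, φᵢ'(0) = 1, and φᵢ(η)·φᵢ'''(η) = 1 for all η ∈ (0,1/2) (i = 1, 2), then φ₁ = φ₂ on [0,1/2]. -/

import Mathlib

def IsTWProfile (φ : ℝ → ℝ) : Prop :=
  ContDiffOn ℝ 1 φ (Set.Icc 0 (1/2)) ∧
  ContDiffOn ℝ 3 φ (Set.Ioo 0 (1/2)) ∧
  (∀ η ∈ Set.Ioo (0:ℝ) (1/2), 0 < φ η) ∧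
  φ 0 = 0 ∧ φ (1/2) = 0 ∧
  derivWithin φ (Set.Icc 0 (1/2)) 0 = 1 ∧
  (∀ η ∈ Set.Ioo (0:ℝ) (1/2), φ η * deriv (deriv (deriv φ)) η = 1)

namespace TWU
open Set Filter Topology

variable {φ : ℝ → ℝ}

lemma cd2 (h : IsTWProfile φ) : ContDiffOn ℝ 2 (deriv φ) (Set.Ioo 0 (1/2)) :=
  h.2.1.deriv_of_isOpen isOpen_Ioo (by norm_num)

lemma cd1 (h : IsTWProfile φ) : ContDiffOn ℝ 1 (deriv (deriv φ)) (Set.Ioo 0 (1/2)) :=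
  (cd2 h).deriv_of_isOpen isOpen_Ioo (by norm_num)

lemma hd1 (h : IsTWProfile φ) {η : ℝ} (hη : η ∈ Set.Ioo (0:ℝ) (1/2)) :
    HasDerivAt φ (deriv φ η) η :=
  ((h.2.1.differentiableOn (by norm_num)).differentiableAt
    (isOpen_Ioo.mem_nhds hη)).hasDerivAt

lemma hd2 (h : IsTWProfile φ) {η : ℝ} (hη : η ∈ Set.Ioo (0:ℝ) (1/2)) :
    HasDerivAt (deriv φ) (deriv (deriv φ) η) η :=
  (((cd2 h).differentiableOn (by norm_num)).differentiableAt
    (isOpen_Ioo.mem_nhds hη)).hasDerivAt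

lemma hd3 (h : IsTWProfile φ) {η : ℝ} (hη : η ∈ Set.Ioo (0:ℝ) (1/2)) :
    HasDerivAt (deriv (deriv φ)) (deriv (deriv (deriv φ)) η) η :=
  (((cd1 h).differentiableOn (by norm_num)).differentiableAt
    (isOpen_Ioo.mem_nhds hη)).hasDerivAt

lemma d3_eq (h : IsTWProfile φ) {η : ℝ} (hη : η ∈ Set.Ioo (0:ℝ) (1/2)) :
    deriv (deriv (deriv φ)) η = 1 / φ η := by
  have hpos := h.2.2.1 η hη
  have h2 := h.2.2.2.2.2.2 η hη
  field_simp
  linarith [h2]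

lemma cont0 (h : IsTWProfile φ) : ContinuousOn φ (Set.Icc 0 (1/2)) := h.1.continuousOn

lemma cont1 (h : IsTWProfile φ) : ContinuousOn (deriv φ) (Set.Ioo 0 (1/2)) :=
  (cd2 h).continuousOn

lemma cont2 (h : IsTWProfile φ) : ContinuousOn (deriv (deriv φ)) (Set.Ioo 0 (1/2)) :=
  (cd1 h).continuousOn

lemma contg (h : IsTWProfile φ) :
    ContinuousOn (derivWithin φ (Set.Icc 0 (1/2))) (Set.Icc 0 (1/2)) :=
  h.1.continuousOn_derivWithin (uniqueDiffOn_Icc (by norm_num)) (by norm_num)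

lemma g_eq (h : IsTWProfile φ) {η : ℝ} (hη : η ∈ Set.Ioo (0:ℝ) (1/2)) :
    derivWithin φ (Set.Icc 0 (1/2)) η = deriv φ η :=
  derivWithin_of_mem_nhds (Icc_mem_nhds hη.1 hη.2)

/-- MVT slope from the left endpoint 0. -/
lemma slope0 (h : IsTWProfile φ) {η : ℝ} (hη : η ∈ Set.Ioo (0:ℝ) (1/2)) :
    ∃ ξ ∈ Set.Ioo 0 η, deriv φ ξ = φ η / η := by
  obtain ⟨ξ, hξ, hs⟩ := exists_hasDerivAt_eq_slope φ (deriv φ) hη.1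
    ((cont0 h).mono (Icc_subset_Icc le_rfl hη.2.le))
    (fun x hx => hd1 h ⟨hx.1, hx.2.trans hη.2⟩)
  exact ⟨ξ, hξ, by rw [hs, h.2.2.2.1, sub_zero, sub_zero]⟩

/-- MVT slope from the right endpoint 1/2. -/
lemma slope_half (h : IsTWProfile φ) {η : ℝ} (hη : η ∈ Set.Ioo (0:ℝ) (1/2)) :
    ∃ ξ ∈ Set.Ioo η (1/2), deriv φ ξ = -φ η / (1/2 - η) := by
  obtain ⟨ξ, hξ, hs⟩ := exists_hasDerivAt_eq_slope φ (deriv φ) hη.2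
    ((cont0 h).mono (Icc_subset_Icc hη.1.le le_rfl))
    (fun x hx => hd1 h ⟨hη.1.trans hx.1, hx.2⟩)
  refine ⟨ξ, hξ, by rw [hs, h.2.2.2.2.1]; ring_nf⟩

lemma tendsto_g0 (h : IsTWProfile φ) :
    Tendsto (deriv φ) (𝓝[Set.Ioo (0:ℝ) (1/2)] 0) (𝓝 1) := by
  have h0 : (0:ℝ) ∈ Set.Icc (0:ℝ) (1/2) := by norm_num
  have := (contg h 0 h0).tendsto
  rw [h.2.2.2.2.2.1] at this
  have h2 : Tendsto (derivWithin φ (Set.Icc 0 (1/2))) (𝓝[Set.Ioo (0:ℝ) (1/2)] 0) (𝓝 1) :=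
    this.mono_left (nhdsWithin_mono _ Set.Ioo_subset_Icc_self)
  refine h2.congr' ?_
  filter_upwards [self_mem_nhdsWithin] with x hx using g_eq h hx

lemma tendsto_g_half (h : IsTWProfile φ) :
    Tendsto (deriv φ) (𝓝[Set.Ioo (0:ℝ) (1/2)] (1/2))
      (𝓝 (derivWithin φ (Set.Icc 0 (1/2)) (1/2))) := by
  have h0 : (1/2:ℝ) ∈ Set.Icc (0:ℝ) (1/2) := by norm_num
  have := (contg h _ h0).tendsto
  have h2 : Tendsto (derivWithin φ (Set.Icc 0 (1/2))) (𝓝[Set.Ioo (0:ℝ) (1/2)] (1/2))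
      (𝓝 (derivWithin φ (Set.Icc 0 (1/2)) (1/2))) :=
    this.mono_left (nhdsWithin_mono _ Set.Ioo_subset_Icc_self)
  refine h2.congr' ?_
  filter_upwards [self_mem_nhdsWithin] with x hx using g_eq h hx

/-- Near 0 the solution is comparable to η. -/
lemma phi_lin (h : IsTWProfile φ) :
    ∃ b : ℝ, 0 < b ∧ b < 1/2 ∧ ∀ η ∈ Set.Ioc (0:ℝ) b, η/2 ≤ φ η ∧ φ η ≤ 2*η := by
  have hev : ∀ᶠ x in 𝓝[Set.Ioo (0:ℝ) (1/2)] 0, |deriv φ x - 1| < 1/2 := by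
    have := tendsto_g0 h
    have : ∀ᶠ x in 𝓝[Set.Ioo (0:ℝ) (1/2)] 0, deriv φ x ∈ Set.Ioo (1/2:ℝ) (3/2) :=
      this (Ioo_mem_nhds (by norm_num) (by norm_num))
    filter_upwards [this] with x hx
    rw [abs_sub_lt_iff]; constructor <;> [linarith [hx.2]; linarith [hx.1]]
  rw [eventually_nhdsWithin_iff, Metric.eventually_nhds_iff] at hev
  obtain ⟨ε, hε, hev⟩ := hev
  refine ⟨min (ε/2) (1/4), by positivity, by
    calc min (ε/2) (1/4) ≤ 1/4 := min_le_right _ _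
    _ < 1/2 := by norm_num, ?_⟩
  intro η hη
  have hη' : η ∈ Set.Ioo (0:ℝ) (1/2) := ⟨hη.1, lt_of_le_of_lt hη.2 (by
    calc min (ε/2) (1/4) ≤ 1/4 := min_le_right _ _
    _ < 1/2 := by norm_num)⟩
  obtain ⟨ξ, hξ, hs⟩ := slope0 h hη'
  have hξI : ξ ∈ Set.Ioo (0:ℝ) (1/2) := ⟨hξ.1, hξ.2.trans hη'.2⟩
  have hd : dist ξ 0 < ε := by
    rw [Real.dist_eq, sub_zero, abs_of_pos hξ.1]
    calc ξ < η := hξ.2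
    _ ≤ min (ε/2) (1/4) := hη.2
    _ ≤ ε/2 := min_le_left _ _
    _ < ε := by linarith
  have := hev hd hξI
  rw [hs, abs_sub_lt_iff] at this
  have h1 : φ η / η < 3/2 := by linarith [this.1]
  have h2 : 1/2 < φ η / η := by linarith [this.2]
  have hηpos := hη.1
  constructor
  · rw [div_lt_div_iff₀ (by norm_num) hηpos] at h2; linarith
  · rw [div_lt_div_iff₀ hηpos (by norm_num)] at h1; linarith

/-- Logarithmic bound for the second derivative near 0. -/
lemma sec_bound (h : IsTWProfile φ) :
    ∃ b K : ℝ, 0 < b ∧ b < 1/2 ∧ 0 ≤ K ∧ ∀ η ∈ Set.Ioo (0:ℝ) b,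
      |deriv (deriv φ) η| ≤ K + 2 * |Real.log η| := by
  obtain ⟨b, hb0, hb2, hblin⟩ := phi_lin h
  refine ⟨b, |deriv (deriv φ) b| + 2 * |Real.log b|, hb0, hb2, by positivity, ?_⟩
  intro η hη
  have hηI : η ∈ Set.Ioo (0:ℝ) (1/2) := ⟨hη.1, hη.2.trans hb2⟩
  have hsub : Set.Icc η b ⊆ Set.Ioo (0:ℝ) (1/2) := fun x hx =>
    ⟨lt_of_lt_of_le hη.1 hx.1, lt_of_le_of_lt hx.2 hb2⟩
  have hd : (0:ℝ) < b - η := by linarith [hη.2]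
  -- upper bound : deriv² φ is increasing
  have hup : deriv (deriv φ) η ≤ deriv (deriv φ) b := by
    obtain ⟨ξ, hξ, hs⟩ := exists_hasDerivAt_eq_slope (deriv (deriv φ))
      (deriv (deriv (deriv φ))) hη.2
      ((cont2 h).mono hsub)
      (fun x hx => hd3 h (hsub ⟨hx.1.le, hx.2.le⟩))
    have hξI : ξ ∈ Set.Ioo (0:ℝ) (1/2) := hsub ⟨hξ.1.le, hξ.2.le⟩
    have h3 : 0 < deriv (deriv (deriv φ)) ξ := by
      rw [d3_eq h hξI]
      exact one_div_pos.mpr (h.2.2.1 ξ hξI)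
    rw [hs, div_pos_iff] at h3
    rcases h3 with ⟨h3, _⟩ | ⟨_, h3⟩
    · linarith
    · linarith
  -- lower bound via comparison with 2 log
  have hlow : deriv (deriv φ) b - 2*Real.log b ≤ deriv (deriv φ) η - 2*Real.log η := by
    set W : ℝ → ℝ := fun t => deriv (deriv φ) t - 2*Real.log t with hW
    have hWd : ∀ x ∈ Set.Ioo η b, HasDerivAt W
        (deriv (deriv (deriv φ)) x - 2*(1/x)) x := by
      intro x hx
      have hxI : x ∈ Set.Ioo (0:ℝ) (1/2) := hsub ⟨hx.1.le, hx.2.le⟩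
      have hlog : HasDerivAt (fun t => 2*Real.log t) (2*(1/x)) x := by
        have := (Real.hasDerivAt_log (ne_of_gt hxI.1)).const_mul 2
        simpa [one_div] using this
      exact (hd3 h hxI).sub hlog
    obtain ⟨ξ, hξ, hs⟩ := exists_hasDerivAt_eq_slope W
      (fun x => deriv (deriv (deriv φ)) x - 2*(1/x)) hη.2
      (by
        apply ContinuousOn.sub ((cont2 h).mono hsub)
        apply ContinuousOn.mul continuousOn_const
        apply Real.continuousOn_log.mono
        intro x hx
        exact ne_of_gt (hsub hx).1)
      hWd
    have hξI : ξ ∈ Set.Ioo (0:ℝ) (1/2) := hsub ⟨hξ.1.le, hξ.2.le⟩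
    have hξb : ξ ∈ Set.Ioc (0:ℝ) b := ⟨hξI.1, hξ.2.le⟩
    have hφξ := (hblin ξ hξb).1
    have hW' : deriv (deriv (deriv φ)) ξ - 2*(1/ξ) ≤ 0 := by
      rw [d3_eq h hξI]
      have h1 : 1/φ ξ ≤ 2/ξ := by
        rw [div_le_div_iff₀ (h.2.2.1 ξ hξI) hξI.1]
        linarith
      have : (2:ℝ)/ξ = 2*(1/ξ) := by ring
      linarith [h1, this ▸ h1]
    rw [hs] at hW'
    have hWb : W b - W η ≤ 0 := by
      rcases div_nonpos_iff.mp hW' with ⟨h3, h4⟩ | ⟨h3, h4⟩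
      · linarith
      · linarith
    simp only [hW] at hWb
    linarith
  have hlK : -|Real.log η| ≤ Real.log η := neg_abs_le _
  have hlb : Real.log b ≤ |Real.log b| := le_abs_self _
  have hbb : -|deriv (deriv φ) b| ≤ deriv (deriv φ) b := neg_abs_le _
  have hbb' : deriv (deriv φ) b ≤ |deriv (deriv φ) b| := le_abs_self _
  rw [abs_le]
  constructor
  · nlinarith [abs_nonneg (Real.log η)]
  · nlinarith [abs_nonneg (Real.log b), abs_nonneg (Real.log η)]

/-- Generic squeeze: (≲ η) × (≲ log) → 0 as η → 0⁺. -/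
lemma tendsto_prod_log_zero {f s : ℝ → ℝ} {b c K : ℝ} (hb : 0 < b)
    (hc : 0 ≤ c) (hK : 0 ≤ K)
    (hf : ∀ η ∈ Set.Ioo (0:ℝ) b, |f η| ≤ c * η)
    (hs : ∀ η ∈ Set.Ioo (0:ℝ) b, |s η| ≤ K + 4 * |Real.log η|) :
    Tendsto (fun η => f η * s η) (𝓝[Set.Ioo (0:ℝ) (1/2)] 0) (𝓝 0) := by
  have hg : Tendsto (fun η : ℝ => c*K*η - 4*c*(η*Real.log η))
      (𝓝[Set.Ioo (0:ℝ) (1/2)] 0) (𝓝 0) := by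
    have hcont : Continuous (fun η : ℝ => c*K*η - 4*c*(η*Real.log η)) :=
      (continuous_const.mul continuous_id).sub (continuous_const.mul Real.continuous_mul_log)
    have := (hcont.tendsto 0).mono_left (nhdsWithin_le_nhds (s := Set.Ioo (0:ℝ) (1/2)))
    simpa using this
  apply squeeze_zero_norm' _ hg
  have hmem : ∀ᶠ x in 𝓝[Set.Ioo (0:ℝ) (1/2)] 0, x ∈ Set.Ioo (0:ℝ) b := by
    have h1 : ∀ᶠ x : ℝ in 𝓝 0, x < b := Filter.Tendsto.eventually_lt_const hb tendsto_id
    filter_upwards [eventually_nhdsWithin_of_eventually_nhds h1, self_mem_nhdsWithin]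
      with x hx1 hx2
    exact ⟨hx2.1, hx1⟩
  filter_upwards [hmem, self_mem_nhdsWithin] with x hx hx12
  have h1 := hf x hx
  have h2 := hs x hx
  have hx0 : 0 < x := hx.1
  have habs : |f x * s x| ≤ (c*x) * (K + 4*|Real.log x|) := by
    rw [abs_mul]
    exact mul_le_mul h1 h2 (abs_nonneg _) (by positivity)
  rw [Real.norm_eq_abs]
  refine habs.trans ?_
  have hlog : Real.log x ≤ 0 := Real.log_nonpos hx0.le (by linarith [hx12.2])
  rw [abs_of_nonpos hlog]
  nlinarith [hx0.le]

/-- The first integral: φ φ'' - φ'²/2 - η ≡ -1/2. -/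
lemma ident (h : IsTWProfile φ) : ∀ η ∈ Set.Ioo (0:ℝ) (1/2),
    φ η * deriv (deriv φ) η = (deriv φ η)^2/2 + η - 1/2 := by
  set G : ℝ → ℝ := fun t => φ t * deriv (deriv φ) t - (deriv φ t)^2/2 - t with hGdef
  have hG' : ∀ x ∈ Set.Ioo (0:ℝ) (1/2), HasDerivAt G 0 x := by
    intro x hx
    have A := (hd1 h hx).mul (hd3 h hx)
    have B := ((hd2 h hx).pow 2).div_const 2
    have C := (A.sub B).sub (hasDerivAt_id x)
    have hφ := (h.2.2.1 x hx).ne'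
    refine C.congr_deriv ?_
    rw [d3_eq h hx]
    field_simp
    ring
  have hconst : ∀ a ∈ Set.Ioo (0:ℝ) (1/2), ∀ b ∈ Set.Ioo (0:ℝ) (1/2), a < b → G a = G b := by
    intro a ha b hb hab
    have hsub : Set.Icc a b ⊆ Set.Ioo (0:ℝ) (1/2) := fun x hx =>
      ⟨lt_of_lt_of_le ha.1 hx.1, lt_of_le_of_lt hx.2 hb.2⟩
    obtain ⟨ξ, hξ, hs⟩ := exists_hasDerivAt_eq_slope G (fun _ => 0) hab
      (fun x hx => ((hG' x (hsub hx)).continuousAt).continuousWithinAt)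
      (fun x hx => hG' x (hsub ⟨hx.1.le, hx.2.le⟩))
    have : (G b - G a) / (b - a) = 0 := hs.symm
    rw [div_eq_zero_iff] at this
    rcases this with h0 | h0
    · linarith [sub_eq_zero.mp h0]
    · linarith [sub_eq_zero.mp h0]
  -- the limit of G at 0⁺ is -1/2
  obtain ⟨b, K, hb0, hb2, hK0, hsec⟩ := sec_bound h
  obtain ⟨b', hb'0, hb'2, hlin⟩ := phi_lin h
  have hmul : Tendsto (fun η => φ η * deriv (deriv φ) η) (𝓝[Set.Ioo (0:ℝ) (1/2)] 0) (𝓝 0) := by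
    refine tendsto_prod_log_zero (b := min b b') (c := 2) (K := K) (lt_min hb0 hb'0) (by norm_num) hK0 ?_ ?_
    · intro η hη
      have hη' : η ∈ Set.Ioc (0:ℝ) b' := ⟨hη.1, (hη.2.trans_le (min_le_right _ _)).le⟩
      have := (hlin η hη').2
      have hpos := (hlin η hη').1
      rw [abs_of_nonneg (by linarith [hη.1])]
      linarith
    · intro η hη
      have := hsec η ⟨hη.1, hη.2.trans_le (min_le_left _ _)⟩
      calc |deriv (deriv φ) η| ≤ K + 2*|Real.log η| := this
      _ ≤ K + 4*|Real.log η| := by linarith [abs_nonneg (Real.log η)]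
  have hlim : Tendsto G (𝓝[Set.Ioo (0:ℝ) (1/2)] 0) (𝓝 (-(1/2))) := by
    have h2 : Tendsto (fun η => (deriv φ η)^2/2) (𝓝[Set.Ioo (0:ℝ) (1/2)] 0) (𝓝 (1/2)) := by
      have := ((tendsto_g0 h).pow 2).div_const 2
      simpa using this
    have h3 : Tendsto (fun η : ℝ => η) (𝓝[Set.Ioo (0:ℝ) (1/2)] 0) (𝓝 0) :=
      tendsto_id.mono_left nhdsWithin_le_nhds
    have := (hmul.sub h2).sub h3
    simpa using this
  have hNB : (𝓝[Set.Ioo (0:ℝ) (1/2)] (0:ℝ)).NeBot := by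
    apply mem_closure_iff_nhdsWithin_neBot.mp
    rw [closure_Ioo (by norm_num : (0:ℝ) ≠ 1/2)]
    exact ⟨le_refl 0, by norm_num⟩
  intro η hη
  have hGη : Tendsto G (𝓝[Set.Ioo (0:ℝ) (1/2)] 0) (𝓝 (G η)) := by
    refine tendsto_const_nhds.congr' ?_
    have h1 : ∀ᶠ x : ℝ in 𝓝 (0:ℝ), x < η := Filter.Tendsto.eventually_lt_const hη.1 tendsto_id
    filter_upwards [eventually_nhdsWithin_of_eventually_nhds h1, self_mem_nhdsWithin]
      with x hx1 hx2
    exact (hconst x hx2 η hη hx1).symm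
  have := tendsto_nhds_unique hGη hlim
  simp only [hGdef] at this
  linarith [this]

lemma neBot_half : (𝓝[Set.Ioo (0:ℝ) (1/2)] ((1:ℝ)/2)).NeBot := by
  apply mem_closure_iff_nhdsWithin_neBot.mp
  rw [closure_Ioo (by norm_num : (0:ℝ) ≠ 1/2)]
  exact ⟨by norm_num, le_refl _⟩

lemma neBot_zero : (𝓝[Set.Ioo (0:ℝ) (1/2)] (0:ℝ)).NeBot := by
  apply mem_closure_iff_nhdsWithin_neBot.mp
  rw [closure_Ioo (by norm_num : (0:ℝ) ≠ 1/2)]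
  exact ⟨le_refl _, by norm_num⟩

set_option maxHeartbeats 1000000 in
/-- Zero contact angle at the right endpoint. -/
lemma sigma_zero (h : IsTWProfile φ) : derivWithin φ (Set.Icc 0 (1/2)) (1/2) = 0 := by
  by_contra hσ
  set σ := derivWithin φ (Set.Icc 0 (1/2)) (1/2) with hσdef
  set ρ := |σ| with hρdef
  have hρ : 0 < ρ := abs_pos.mpr hσ
  have hev : ∀ᶠ x in 𝓝[Set.Ioo (0:ℝ) (1/2)] (1/2), |deriv φ x - σ| < ρ/2 := by
    have := tendsto_g_half h
    have h2 := this (Metric.ball_mem_nhds σ (half_pos hρ))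
    filter_upwards [h2] with x hx
    rw [Set.mem_preimage, Metric.mem_ball, Real.dist_eq] at hx
    exact hx
  rw [eventually_nhdsWithin_iff, Metric.eventually_nhds_iff] at hev
  obtain ⟨ε, hε, hev⟩ := hev
  set δ := min (min ε (ρ^2/16)) (1/4) with hδdef
  have hδ0 : 0 < δ := by positivity
  have hδε : δ ≤ ε := le_trans (min_le_left _ _) (min_le_left _ _)
  have hδρ : δ ≤ ρ^2/16 := le_trans (min_le_left _ _) (min_le_right _ _)
  have hδ4 : δ ≤ 1/4 := min_le_right _ _
  set η₂ : ℝ := 1/2 - δ with hη₂def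
  have hη₂I : η₂ ∈ Set.Ioo (0:ℝ) (1/2) := ⟨by rw [hη₂def]; linarith, by rw [hη₂def]; linarith⟩
  -- key fact on (η₂, 1/2)
  have hfact : ∀ x ∈ Set.Ioo η₂ (1/2),
      ρ/(32*(1/2 - x)) ≤ deriv (deriv φ) x := by
    intro x hx
    have hxI : x ∈ Set.Ioo (0:ℝ) (1/2) := ⟨lt_trans hη₂I.1 hx.1, hx.2⟩
    have hsx : 0 < 1/2 - x := by linarith [hx.2]
    have hsδ : 1/2 - x < δ := by
      have := hx.1; rw [hη₂def] at this; linarith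
    have hdist : dist x (1/2 : ℝ) < ε := by
      rw [Real.dist_eq, abs_of_nonpos (by linarith : x - 1/2 ≤ 0)]
      linarith
    have hF1 := hev hdist hxI
    -- (F2) φ x ≤ 2ρ (1/2 - x)
    have hF2 : φ x ≤ 2*ρ*(1/2 - x) := by
      obtain ⟨ξ, hξ, hs⟩ := slope_half h hxI
      have hξI : ξ ∈ Set.Ioo (0:ℝ) (1/2) := ⟨lt_trans hxI.1 hξ.1, hξ.2⟩
      have hdistξ : dist ξ (1/2 : ℝ) < ε := by
        rw [Real.dist_eq, abs_of_nonpos (by linarith [hξ.2] : ξ - 1/2 ≤ 0)]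
        linarith [hξ.1]
      have hξb := hev hdistξ hξI
      have habs : -(deriv φ ξ) ≤ 2*ρ := by
        have h2 := abs_sub_abs_le_abs_sub (deriv φ ξ) σ
        have h3 : |deriv φ ξ| ≤ ρ + ρ/2 := by
          rw [hρdef]; linarith [h2, hξb.le]
        cases' abs_le.mp h3 with h4 h5
        linarith
      have hne : (1/2 - x) ≠ 0 := ne_of_gt hsx
      have h5 : deriv φ ξ * (1/2 - x) = -φ x := by
        rw [hs, div_mul_cancel₀ _ hne]
      rw [show φ x = -(deriv φ ξ) * (1/2 - x) by linarith]
      nlinarith [hsx]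
    -- (F3) via the identity
    have hF3 : ρ^2/16 ≤ φ x * deriv (deriv φ) x := by
      rw [ident h x hxI]
      have hlow : ρ/2 ≤ |deriv φ x| := by
        have h2 := abs_sub_abs_le_abs_sub σ (deriv φ x)
        rw [abs_sub_comm] at h2
        rw [hρdef]
        linarith [hF1, h2]
      have hsq : (ρ/2)^2 ≤ (deriv φ x)^2 := by
        have := pow_le_pow_left₀ (by positivity : (0:ℝ) ≤ ρ/2) hlow 2
        rwa [sq_abs] at this
      nlinarith [hsδ, hδρ]
    have hφpos := h.2.2.1 x hxI
    have hd2pos : 0 < deriv (deriv φ) x := by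
      have hprod : 0 < φ x * deriv (deriv φ) x := lt_of_lt_of_le (by positivity) hF3
      by_contra hcon
      push_neg at hcon
      nlinarith
    rw [div_le_iff₀ (by positivity)]
    nlinarith [mul_le_mul_of_nonneg_right hF2 hd2pos.le]
  -- the comparison function W
  set W : ℝ → ℝ := fun t => deriv φ t + (ρ/32) * Real.log (1/2 - t) with hWdef
  have hWd : ∀ x ∈ Set.Ioo η₂ (1/2),
      HasDerivAt W (deriv (deriv φ) x - (ρ/32) * (1/(1/2 - x))) x := by
    intro x hx
    have hxI : x ∈ Set.Ioo (0:ℝ) (1/2) := ⟨lt_trans hη₂I.1 hx.1, hx.2⟩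
    have hsx : 0 < 1/2 - x := by linarith [hx.2]
    have hlog : HasDerivAt (fun t : ℝ => Real.log (1/2 - t)) (-(1/(1/2 - x))) x := by
      have hinner : HasDerivAt (fun t : ℝ => 1/2 - t) (-1) x := by
        exact ((hasDerivAt_const x (1/2:ℝ)).sub (hasDerivAt_id x)).congr_deriv (by norm_num)
      have := (Real.hasDerivAt_log (ne_of_gt hsx)).comp x hinner
      exact this.congr_deriv (by ring)
    have := (hd2 h hxI).add ((hlog.const_mul (ρ/32)))
    refine this.congr_deriv ?_
    ring
  -- W is nondecreasing on [η₂, 1/2)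
  have hmono : ∀ t ∈ Set.Ioo η₂ (1/2), W η₂ ≤ W t := by
    intro t ht
    have hsub : Set.Icc η₂ t ⊆ Set.Ioo (0:ℝ) (1/2) := fun x hx =>
      ⟨lt_of_lt_of_le hη₂I.1 hx.1, lt_of_le_of_lt hx.2 ht.2⟩
    obtain ⟨ξ, hξ, hs⟩ := exists_hasDerivAt_eq_slope W
      (fun x => deriv (deriv φ) x - (ρ/32) * (1/(1/2 - x))) ht.1
      (by
        apply ContinuousOn.add ((cont1 h).mono hsub)
        apply ContinuousOn.mul continuousOn_const
        have hmap : Set.MapsTo (fun t : ℝ => 1/2 - t) (Set.Icc η₂ t) {(0:ℝ)}ᶜ := by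
          intro x hx
          have := (hsub hx).2
          simp only [Set.mem_compl_iff, Set.mem_singleton_iff]
          intro hc
          rw [sub_eq_zero] at hc
          exact absurd hc.symm (ne_of_lt this)
        exact Real.continuousOn_log.comp
          ((continuous_const.sub continuous_id).continuousOn) hmap)
      (fun x hx => hWd x ⟨hx.1, hx.2.trans ht.2⟩)
    have hξ2 : ξ ∈ Set.Ioo η₂ (1/2) := ⟨hξ.1, hξ.2.trans ht.2⟩
    have hkey := hfact ξ hξ2
    have hsξ : 0 < 1/2 - ξ := by linarith [hξ2.2]
    have hge : 0 ≤ (W t - W η₂) / (t - η₂) := by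
      have heq : ρ/32 * (1/(1/2 - ξ)) = ρ/(32*(1/2 - ξ)) := by
        rw [div_mul_div_comm, mul_one]
      rw [← hs, heq]
      linarith [hkey]
    have hd : 0 < t - η₂ := by linarith [ht.1]
    rcases div_nonneg_iff.mp hge with ⟨h1, _⟩ | ⟨_, h2⟩
    · linarith
    · linarith
  -- but W tends to -∞ at 1/2⁻
  have hWbot : Tendsto W (𝓝[Set.Ioo η₂ (1/2)] (1/2:ℝ)) atBot := by
    have hmonoF : 𝓝[Set.Ioo η₂ (1/2)] (1/2:ℝ) ≤ 𝓝[Set.Ioo (0:ℝ) (1/2)] (1/2:ℝ) :=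
      nhdsWithin_mono _ (fun x hx => ⟨lt_trans hη₂I.1 hx.1, hx.2⟩)
    have h1 : Tendsto (deriv φ) (𝓝[Set.Ioo η₂ (1/2)] (1/2:ℝ)) (𝓝 σ) :=
      (tendsto_g_half h).mono_left hmonoF
    have h2 : Tendsto (fun t : ℝ => 1/2 - t) (𝓝[Set.Ioo η₂ (1/2)] (1/2:ℝ)) (𝓝[>] 0) := by
      apply tendsto_nhdsWithin_of_tendsto_nhds_of_eventually_within
      · have : Tendsto (fun t : ℝ => 1/2 - t) (𝓝 (1/2:ℝ)) (𝓝 (1/2 - 1/2)) :=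
          (continuous_const.sub continuous_id).tendsto _
        simpa using this.mono_left nhdsWithin_le_nhds
      · filter_upwards [self_mem_nhdsWithin] with x hx
        simp only [Set.mem_Ioi]
        linarith [hx.2]
    have h3 : Tendsto (fun t : ℝ => Real.log (1/2 - t))
        (𝓝[Set.Ioo η₂ (1/2)] (1/2:ℝ)) atBot :=
      Real.tendsto_log_nhdsGT_zero.comp h2
    have h4 : Tendsto (fun t : ℝ => (ρ/32) * Real.log (1/2 - t))
        (𝓝[Set.Ioo η₂ (1/2)] (1/2:ℝ)) atBot := by
      apply Tendsto.const_mul_atBot (by positivity : (0:ℝ) < ρ/32) h3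
    exact h1.add_atBot h4
  have hlt : ∀ᶠ t in 𝓝[Set.Ioo η₂ (1/2)] (1/2:ℝ), W t < W η₂ :=
    hWbot.eventually (eventually_lt_atBot (W η₂))
  have hNB : (𝓝[Set.Ioo η₂ (1/2)] ((1:ℝ)/2)).NeBot := by
    apply mem_closure_iff_nhdsWithin_neBot.mp
    rw [closure_Ioo (ne_of_lt hη₂I.2)]
    exact ⟨hη₂I.2.le, le_refl _⟩
  obtain ⟨t, hts, htmem⟩ := (hlt.and self_mem_nhdsWithin).exists
  exact absurd (hmono t htmem) (not_le.mpr hts)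

lemma neBot_Ioo_half {a : ℝ} (ha : a < 1/2) :
    (𝓝[Set.Ioo a (1/2)] ((1:ℝ)/2)).NeBot := by
  apply mem_closure_iff_nhdsWithin_neBot.mp
  rw [closure_Ioo (ne_of_lt ha)]
  exact ⟨ha.le, le_refl _⟩

/-- φ → 0 at the right endpoint. -/
lemma tendsto_phi_half (h : IsTWProfile φ) :
    Tendsto φ (𝓝[Set.Ioo (0:ℝ) (1/2)] (1/2:ℝ)) (𝓝 0) := by
  have hm : (1/2:ℝ) ∈ Set.Icc (0:ℝ) (1/2) := by norm_num
  have := ((cont0 h) _ hm).tendsto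
  rw [h.2.2.2.2.1] at this
  exact this.mono_left (nhdsWithin_mono _ Set.Ioo_subset_Icc_self)

/-- φ' → 0 at the right endpoint. -/
lemma tendsto_d1_half (h : IsTWProfile φ) :
    Tendsto (deriv φ) (𝓝[Set.Ioo (0:ℝ) (1/2)] (1/2:ℝ)) (𝓝 0) := by
  have := tendsto_g_half h
  rwa [sigma_zero h] at this

section Two

variable {φ₁ φ₂ : ℝ → ℝ}

/-- The energy function for the difference of two profiles. -/
noncomputable def Efun (φ₁ φ₂ : ℝ → ℝ) : ℝ → ℝ := fun t =>
  (φ₁ t - φ₂ t) * (deriv (deriv φ₁) t - deriv (deriv φ₂) t)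
    - (deriv φ₁ t - deriv φ₂ t)^2/2

lemma E_hasDeriv (h₁ : IsTWProfile φ₁) (h₂ : IsTWProfile φ₂)
    {x : ℝ} (hx : x ∈ Set.Ioo (0:ℝ) (1/2)) :
    HasDerivAt (Efun φ₁ φ₂) (-((φ₁ x - φ₂ x)^2/(φ₁ x * φ₂ x))) x := by
  have A : HasDerivAt (fun t => φ₁ t - φ₂ t) (deriv φ₁ x - deriv φ₂ x) x :=
    (hd1 h₁ hx).sub (hd1 h₂ hx)
  have B : HasDerivAt (fun t => deriv (deriv φ₁) t - deriv (deriv φ₂) t)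
      (deriv (deriv (deriv φ₁)) x - deriv (deriv (deriv φ₂)) x) x :=
    (hd3 h₁ hx).sub (hd3 h₂ hx)
  have C : HasDerivAt (fun t => deriv φ₁ t - deriv φ₂ t)
      (deriv (deriv φ₁) x - deriv (deriv φ₂) x) x :=
    (hd2 h₁ hx).sub (hd2 h₂ hx)
  have D := (A.mul B).sub ((C.pow 2).div_const 2)
  refine D.congr_deriv ?_
  rw [d3_eq h₁ hx, d3_eq h₂ hx]
  have hp1 := (h₁.2.2.1 x hx).ne'
  have hp2 := (h₂.2.2.1 x hx).ne'
  field_simp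
  ring

lemma E_deriv_nonpos (h₁ : IsTWProfile φ₁) (h₂ : IsTWProfile φ₂)
    {x : ℝ} (hx : x ∈ Set.Ioo (0:ℝ) (1/2)) :
    -((φ₁ x - φ₂ x)^2/(φ₁ x * φ₂ x)) ≤ 0 := by
  have hp1 := h₁.2.2.1 x hx
  have hp2 := h₂.2.2.1 x hx
  have : 0 ≤ (φ₁ x - φ₂ x)^2/(φ₁ x * φ₂ x) := by positivity
  linarith

lemma E_anti (h₁ : IsTWProfile φ₁) (h₂ : IsTWProfile φ₂)
    {a b : ℝ} (ha : a ∈ Set.Ioo (0:ℝ) (1/2)) (hb : b ∈ Set.Ioo (0:ℝ) (1/2))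
    (hab : a ≤ b) : Efun φ₁ φ₂ b ≤ Efun φ₁ φ₂ a := by
  rcases eq_or_lt_of_le hab with rfl | hlt
  · exact le_refl _
  have hsub : Set.Icc a b ⊆ Set.Ioo (0:ℝ) (1/2) := fun x hx =>
    ⟨lt_of_lt_of_le ha.1 hx.1, lt_of_le_of_lt hx.2 hb.2⟩
  obtain ⟨ξ, hξ, hs⟩ := exists_hasDerivAt_eq_slope (Efun φ₁ φ₂)
    (fun x => -((φ₁ x - φ₂ x)^2/(φ₁ x * φ₂ x))) hlt
    (fun x hx => ((E_hasDeriv h₁ h₂ (hsub hx)).continuousAt).continuousWithinAt)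
    (fun x hx => E_hasDeriv h₁ h₂ (hsub ⟨hx.1.le, hx.2.le⟩))
  have hξI := hsub ⟨hξ.1.le, hξ.2.le⟩
  have hle := E_deriv_nonpos h₁ h₂ hξI
  rw [hs] at hle
  have hd : 0 < b - a := by linarith
  rcases div_nonpos_iff.mp hle with ⟨_, h4⟩ | ⟨h3, _⟩
  · linarith
  · linarith

lemma E_tendsto_zero (h₁ : IsTWProfile φ₁) (h₂ : IsTWProfile φ₂) :
    Tendsto (Efun φ₁ φ₂) (𝓝[Set.Ioo (0:ℝ) (1/2)] 0) (𝓝 0) := by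
  obtain ⟨b₁, hb₁0, hb₁2, hlin₁⟩ := phi_lin h₁
  obtain ⟨b₂, hb₂0, hb₂2, hlin₂⟩ := phi_lin h₂
  obtain ⟨c₁, K₁, hc₁0, hc₁2, hK₁, hsec₁⟩ := sec_bound h₁
  obtain ⟨c₂, K₂, hc₂0, hc₂2, hK₂, hsec₂⟩ := sec_bound h₂
  set b := min (min b₁ b₂) (min c₁ c₂) with hbdef
  have hb0 : 0 < b := by positivity
  have hprod : Tendsto (fun η => (φ₁ η - φ₂ η) *
      (deriv (deriv φ₁) η - deriv (deriv φ₂) η)) (𝓝[Set.Ioo (0:ℝ) (1/2)] 0) (𝓝 0) := by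
    refine tendsto_prod_log_zero (b := b) (c := 4) (K := K₁ + K₂) hb0 (by norm_num)
      (by linarith) ?_ ?_
    · intro η hη
      have h1 := hlin₁ η ⟨hη.1, le_trans hη.2.le (le_trans (min_le_left _ _) (min_le_left _ _))⟩
      have h2 := hlin₂ η ⟨hη.1, le_trans hη.2.le (le_trans (min_le_left _ _) (min_le_right _ _))⟩
      rw [abs_le]
      constructor <;> nlinarith [h1.1, h1.2, h2.1, h2.2, hη.1]
    · intro η hη
      have h1 := hsec₁ η ⟨hη.1, lt_of_lt_of_le hη.2 (le_trans (min_le_right _ _) (min_le_left _ _))⟩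
      have h2 := hsec₂ η ⟨hη.1, lt_of_lt_of_le hη.2 (le_trans (min_le_right _ _) (min_le_right _ _))⟩
      calc |deriv (deriv φ₁) η - deriv (deriv φ₂) η|
          ≤ |deriv (deriv φ₁) η| + |deriv (deriv φ₂) η| := abs_sub _ _
        _ ≤ (K₁ + K₂) + 4*|Real.log η| := by linarith
  have hsq : Tendsto (fun η => (deriv φ₁ η - deriv φ₂ η)^2/2)
      (𝓝[Set.Ioo (0:ℝ) (1/2)] 0) (𝓝 0) := by
    have := (((tendsto_g0 h₁).sub (tendsto_g0 h₂)).pow 2).div_const 2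
    simpa using this
  have := hprod.sub hsq
  rw [sub_zero] at this
  exact this

lemma E_nonpos (h₁ : IsTWProfile φ₁) (h₂ : IsTWProfile φ₂)
    {η : ℝ} (hη : η ∈ Set.Ioo (0:ℝ) (1/2)) : Efun φ₁ φ₂ η ≤ 0 := by
  haveI := neBot_zero
  refine ge_of_tendsto (E_tendsto_zero h₁ h₂) ?_
  have h1 : ∀ᶠ x : ℝ in 𝓝 (0:ℝ), x < η := Filter.Tendsto.eventually_lt_const hη.1 tendsto_id
  filter_upwards [eventually_nhdsWithin_of_eventually_nhds h1, self_mem_nhdsWithin]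
    with x hx1 hx2
  exact E_anti h₁ h₂ hx2 hη hx1.le

lemma v_hasDeriv (h₁ : IsTWProfile φ₁) (h₂ : IsTWProfile φ₂)
    {x : ℝ} (hx : x ∈ Set.Ioo (0:ℝ) (1/2)) :
    HasDerivAt (fun t => (φ₁ t - φ₂ t)^2)
      (2*(φ₁ x - φ₂ x)*(deriv φ₁ x - deriv φ₂ x)) x := by
  have A : HasDerivAt (fun t => φ₁ t - φ₂ t) (deriv φ₁ x - deriv φ₂ x) x :=
    (hd1 h₁ hx).sub (hd1 h₂ hx)
  have := A.pow 2
  refine this.congr_deriv ?_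
  ring

lemma v'_hasDeriv (h₁ : IsTWProfile φ₁) (h₂ : IsTWProfile φ₂)
    {x : ℝ} (hx : x ∈ Set.Ioo (0:ℝ) (1/2)) :
    HasDerivAt (fun t => 2*(φ₁ t - φ₂ t)*(deriv φ₁ t - deriv φ₂ t))
      (2*(deriv φ₁ x - deriv φ₂ x)^2
        + 2*((φ₁ x - φ₂ x) * (deriv (deriv φ₁) x - deriv (deriv φ₂) x))) x := by
  have A : HasDerivAt (fun t => 2*(φ₁ t - φ₂ t)) (2*(deriv φ₁ x - deriv φ₂ x)) x :=
    ((hd1 h₁ hx).sub (hd1 h₂ hx)).const_mul 2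
  have C : HasDerivAt (fun t => deriv φ₁ t - deriv φ₂ t)
      (deriv (deriv φ₁) x - deriv (deriv φ₂) x) x :=
    (hd2 h₁ hx).sub (hd2 h₂ hx)
  have := A.mul C
  refine this.congr_deriv ?_
  ring

/-- E is nonnegative: otherwise u² would become negative near 1/2. -/
lemma E_nonneg (h₁ : IsTWProfile φ₁) (h₂ : IsTWProfile φ₂)
    {η : ℝ} (hη : η ∈ Set.Ioo (0:ℝ) (1/2)) : 0 ≤ Efun φ₁ φ₂ η := by
  by_contra hcon
  push_neg at hcon
  set ε := -(Efun φ₁ φ₂ η) with hεdef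
  have hε : 0 < ε := by simp only [hεdef]; linarith
  -- u' squared is eventually small near 1/2
  have hu' : Tendsto (fun t => deriv φ₁ t - deriv φ₂ t)
      (𝓝[Set.Ioo (0:ℝ) (1/2)] (1/2:ℝ)) (𝓝 0) := by
    have := (tendsto_d1_half h₁).sub (tendsto_d1_half h₂)
    simpa using this
  have hu : Tendsto (fun t => φ₁ t - φ₂ t)
      (𝓝[Set.Ioo (0:ℝ) (1/2)] (1/2:ℝ)) (𝓝 0) := by
    have := (tendsto_phi_half h₁).sub (tendsto_phi_half h₂)
    simpa using this
  have hv' : Tendsto (fun t => 2*(φ₁ t - φ₂ t)*(deriv φ₁ t - deriv φ₂ t))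
      (𝓝[Set.Ioo (0:ℝ) (1/2)] (1/2:ℝ)) (𝓝 0) := by
    have := ((hu.const_mul 2).mul hu')
    simpa using this
  have hv : Tendsto (fun t => (φ₁ t - φ₂ t)^2)
      (𝓝[Set.Ioo (0:ℝ) (1/2)] (1/2:ℝ)) (𝓝 0) := by
    have := hu.pow 2
    simpa using this
  -- find η₃
  have hev : ∀ᶠ x in 𝓝[Set.Ioo (0:ℝ) (1/2)] (1/2:ℝ),
      (deriv φ₁ x - deriv φ₂ x)^2 < ε/6 := by
    have h0 : Tendsto (fun x => (deriv φ₁ x - deriv φ₂ x)^2)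
        (𝓝[Set.Ioo (0:ℝ) (1/2)] (1/2:ℝ)) (𝓝 0) := by
      simpa using hu'.pow 2
    have h2 := h0 (Metric.ball_mem_nhds _ (by positivity : (0:ℝ) < ε/6))
    filter_upwards [h2] with x hx
    rw [Set.mem_preimage, Metric.mem_ball, Real.dist_eq, sub_zero] at hx
    calc (deriv φ₁ x - deriv φ₂ x)^2 ≤ |(deriv φ₁ x - deriv φ₂ x)^2| := le_abs_self _
    _ < ε/6 := hx
  rw [eventually_nhdsWithin_iff, Metric.eventually_nhds_iff] at hev
  obtain ⟨ε', hε', hev⟩ := hev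
  set η₃ : ℝ := max η (1/2 - min ε' (1/4)) with hη₃def
  have hη₃I : η₃ ∈ Set.Ioo (0:ℝ) (1/2) := by
    constructor
    · exact lt_of_lt_of_le hη.1 (le_max_left _ _)
    · apply max_lt hη.2
      have : 0 < min ε' (1/4) := lt_min hε' (by norm_num)
      linarith
  -- on (η₃, 1/2) the second derivative of v is ≤ -ε
  have hw_neg : ∀ x ∈ Set.Ioo η₃ (1/2),
      2*(deriv φ₁ x - deriv φ₂ x)^2
        + 2*((φ₁ x - φ₂ x) * (deriv (deriv φ₁) x - deriv (deriv φ₂) x)) ≤ -ε := by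
    intro x hx
    have hxI : x ∈ Set.Ioo (0:ℝ) (1/2) := ⟨lt_trans hη₃I.1 hx.1, hx.2⟩
    have hxη : η ≤ x := le_of_lt (lt_of_le_of_lt (le_max_left _ _) hx.1)
    have hEx : Efun φ₁ φ₂ x ≤ -ε := by
      have := E_anti h₁ h₂ hη hxI hxη
      simp only [hεdef]; linarith
    have hdist : dist x (1/2:ℝ) < ε' := by
      rw [Real.dist_eq, abs_of_nonpos (by linarith [hx.2] : x - 1/2 ≤ 0)]
      have h5 : 1/2 - min ε' (1/4) ≤ η₃ := le_max_right _ _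
      have h6 : min ε' (1/4) ≤ ε' := min_le_left _ _
      linarith [hx.1]
    have hsmall := hev hdist hxI
    have hEdef : (φ₁ x - φ₂ x) * (deriv (deriv φ₁) x - deriv (deriv φ₂) x)
        = Efun φ₁ φ₂ x + (deriv φ₁ x - deriv φ₂ x)^2/2 := by
      simp only [Efun]; ring
    rw [hEdef]
    linarith [hsmall, hEx]
  -- v' is strictly positive on (η₃, 1/2)
  have hv'pos : ∀ a ∈ Set.Ioo η₃ (1/2),
      ε*(1/2 - a) ≤ 2*(φ₁ a - φ₂ a)*(deriv φ₁ a - deriv φ₂ a) := by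
    intro a ha
    have haI : a ∈ Set.Ioo (0:ℝ) (1/2) := ⟨lt_trans hη₃I.1 ha.1, ha.2⟩
    haveI := neBot_Ioo_half ha.2
    have hvt : Tendsto (fun b => 2*(φ₁ b - φ₂ b)*(deriv φ₁ b - deriv φ₂ b) + ε*(b - a))
        (𝓝[Set.Ioo a (1/2)] (1/2:ℝ)) (𝓝 (0 + ε*(1/2 - a))) := by
      apply Tendsto.add
      · exact hv'.mono_left (nhdsWithin_mono _ (fun x hx => ⟨lt_trans haI.1 hx.1, hx.2⟩))
      · have : Tendsto (fun b : ℝ => ε*(b - a)) (𝓝 (1/2:ℝ)) (𝓝 (ε*(1/2 - a))) := by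
          apply Tendsto.const_mul
          exact (continuous_id.sub continuous_const).tendsto _
        exact this.mono_left nhdsWithin_le_nhds
    rw [zero_add] at hvt
    refine le_of_tendsto hvt ?_
    filter_upwards [self_mem_nhdsWithin] with b hb
    -- MVT for v' on [a, b]
    have hab : a < b := hb.1
    have hsub : Set.Icc a b ⊆ Set.Ioo (0:ℝ) (1/2) := fun x hx =>
      ⟨lt_of_lt_of_le haI.1 hx.1, lt_of_le_of_lt hx.2 hb.2⟩
    obtain ⟨ξ, hξ, hs⟩ := exists_hasDerivAt_eq_slope
      (fun t => 2*(φ₁ t - φ₂ t)*(deriv φ₁ t - deriv φ₂ t))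
      (fun x => 2*(deriv φ₁ x - deriv φ₂ x)^2
        + 2*((φ₁ x - φ₂ x) * (deriv (deriv φ₁) x - deriv (deriv φ₂) x))) hab
      (fun x hx => ((v'_hasDeriv h₁ h₂ (hsub hx)).continuousAt).continuousWithinAt)
      (fun x hx => v'_hasDeriv h₁ h₂ (hsub ⟨hx.1.le, hx.2.le⟩))
    have hξ3 : ξ ∈ Set.Ioo η₃ (1/2) := ⟨lt_trans ha.1 hξ.1, hξ.2.trans hb.2⟩
    have hwb := hw_neg ξ hξ3
    have hslope : (2*(φ₁ b - φ₂ b)*(deriv φ₁ b - deriv φ₂ b)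
        - 2*(φ₁ a - φ₂ a)*(deriv φ₁ a - deriv φ₂ a)) / (b - a) ≤ -ε := by
      rw [← hs]
      exact hwb
    have hba : 0 < b - a := by linarith
    rw [div_le_iff₀ hba] at hslope
    nlinarith [hslope]
  -- v is strictly increasing on (η₃, 1/2) : pick points
  obtain ⟨d, hddef⟩ : ∃ x : ℝ, x = 1/2 - η₃ := ⟨_, rfl⟩
  have hd0 : 0 < d := by rw [hddef]; linarith [hη₃I.2]
  obtain ⟨a₀, ha₀def⟩ : ∃ x : ℝ, x = η₃ + d/4 := ⟨_, rfl⟩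
  obtain ⟨b₀, hb₀def⟩ : ∃ x : ℝ, x = η₃ + d/2 := ⟨_, rfl⟩
  have ha₀ : a₀ ∈ Set.Ioo η₃ (1/2) := ⟨by rw [ha₀def]; linarith,
    by rw [ha₀def]; rw [hddef] at hd0 ⊢; linarith⟩
  have hb₀ : b₀ ∈ Set.Ioo η₃ (1/2) := ⟨by rw [hb₀def]; linarith,
    by rw [hb₀def]; rw [hddef] at hd0 ⊢; linarith⟩
  have ha₀b₀ : a₀ < b₀ := by rw [ha₀def, hb₀def]; linarith
  -- v a₀ < v b₀
  have hvincr : (φ₁ a₀ - φ₂ a₀)^2 < (φ₁ b₀ - φ₂ b₀)^2 := by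
    have hsub : Set.Icc a₀ b₀ ⊆ Set.Ioo (0:ℝ) (1/2) := fun x hx =>
      ⟨lt_trans hη₃I.1 (lt_of_lt_of_le ha₀.1 hx.1), lt_of_le_of_lt hx.2 hb₀.2⟩
    obtain ⟨ξ, hξ, hs⟩ := exists_hasDerivAt_eq_slope
      (fun t => (φ₁ t - φ₂ t)^2)
      (fun t => 2*(φ₁ t - φ₂ t)*(deriv φ₁ t - deriv φ₂ t)) ha₀b₀
      (fun x hx => ((v_hasDeriv h₁ h₂ (hsub hx)).continuousAt).continuousWithinAt)
      (fun x hx => v_hasDeriv h₁ h₂ (hsub ⟨hx.1.le, hx.2.le⟩))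
    have hξ3 : ξ ∈ Set.Ioo η₃ (1/2) := ⟨lt_trans ha₀.1 hξ.1, hξ.2.trans hb₀.2⟩
    have hp := hv'pos ξ hξ3
    have hpos : 0 < 2*(φ₁ ξ - φ₂ ξ)*(deriv φ₁ ξ - deriv φ₂ ξ) :=
      lt_of_lt_of_le (by nlinarith [hξ3.2] : (0:ℝ) < ε*(1/2 - ξ)) hp
    rw [hs] at hpos
    have hba : 0 < b₀ - a₀ := by linarith
    rcases div_pos_iff.mp hpos with ⟨h3, _⟩ | ⟨_, h4⟩
    · linarith
    · linarith
  -- but v b₀ ≤ 0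
  have hvb₀ : (φ₁ b₀ - φ₂ b₀)^2 ≤ 0 := by
    haveI := neBot_Ioo_half hb₀.2
    have hvt : Tendsto (fun t => (φ₁ t - φ₂ t)^2)
        (𝓝[Set.Ioo b₀ (1/2)] (1/2:ℝ)) (𝓝 0) :=
      hv.mono_left (nhdsWithin_mono _ (fun x hx =>
        ⟨lt_trans (lt_trans hη₃I.1 hb₀.1) hx.1, hx.2⟩))
    refine ge_of_tendsto hvt ?_
    filter_upwards [self_mem_nhdsWithin] with t ht
    -- v b₀ ≤ v t via MVT
    have hbt : b₀ < t := ht.1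
    have hsub : Set.Icc b₀ t ⊆ Set.Ioo (0:ℝ) (1/2) := fun x hx =>
      ⟨lt_trans hη₃I.1 (lt_of_lt_of_le hb₀.1 hx.1), lt_of_le_of_lt hx.2 ht.2⟩
    obtain ⟨ξ, hξ, hs⟩ := exists_hasDerivAt_eq_slope
      (fun t => (φ₁ t - φ₂ t)^2)
      (fun t => 2*(φ₁ t - φ₂ t)*(deriv φ₁ t - deriv φ₂ t)) hbt
      (fun x hx => ((v_hasDeriv h₁ h₂ (hsub hx)).continuousAt).continuousWithinAt)
      (fun x hx => v_hasDeriv h₁ h₂ (hsub ⟨hx.1.le, hx.2.le⟩))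
    have hξ3 : ξ ∈ Set.Ioo η₃ (1/2) := ⟨lt_trans hb₀.1 hξ.1, hξ.2.trans ht.2⟩
    have hp := hv'pos ξ hξ3
    have hpos : 0 < 2*(φ₁ ξ - φ₂ ξ)*(deriv φ₁ ξ - deriv φ₂ ξ) :=
      lt_of_lt_of_le (by nlinarith [hξ3.2] : (0:ℝ) < ε*(1/2 - ξ)) hp
    rw [hs] at hpos
    have hba : 0 < t - b₀ := by linarith
    rcases div_pos_iff.mp hpos with ⟨h3, _⟩ | ⟨_, h4⟩
    · linarith
    · linarith
  nlinarith [sq_nonneg (φ₁ a₀ - φ₂ a₀), hvincr, hvb₀]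

/-- On the open interval the two profiles agree. -/
lemma eq_on_open (h₁ : IsTWProfile φ₁) (h₂ : IsTWProfile φ₂)
    {η : ℝ} (hη : η ∈ Set.Ioo (0:ℝ) (1/2)) : φ₁ η = φ₂ η := by
  have hEzero : ∀ x ∈ Set.Ioo (0:ℝ) (1/2), Efun φ₁ φ₂ x = 0 := fun x hx =>
    le_antisymm (E_nonpos h₁ h₂ hx) (E_nonneg h₁ h₂ hx)
  have hEq : Efun φ₁ φ₂ =ᶠ[𝓝 η] (fun _ => (0:ℝ)) :=
    Filter.eventuallyEq_of_mem (isOpen_Ioo.mem_nhds hη) (fun x hx => hEzero x hx)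
  have hder : HasDerivAt (fun _ : ℝ => (0:ℝ))
      (-((φ₁ η - φ₂ η)^2/(φ₁ η * φ₂ η))) η :=
    (E_hasDeriv h₁ h₂ hη).congr_of_eventuallyEq hEq.symm
  have huniq := (hasDerivAt_const η (0:ℝ)).unique hder
  have hp1 := h₁.2.2.1 η hη
  have hp2 := h₂.2.2.1 η hη
  have hne : φ₁ η * φ₂ η ≠ 0 := by positivity
  field_simp at huniq
  nlinarith [huniq, sq_nonneg (φ₁ η - φ₂ η)]

end Two

end TWU

/-- Uniqueness part of Theorem 1: any two traveling-wave profiles coincide on `[0,1/2]`. -/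
theorem traveling_wave_profile_unique (φ₁ φ₂ : ℝ → ℝ)
    (h₁ : IsTWProfile φ₁) (h₂ : IsTWProfile φ₂) :
    Set.EqOn φ₁ φ₂ (Set.Icc 0 (1/2)) := by
  intro x hx
  rcases eq_or_lt_of_le hx.1 with h0 | h0
  · rw [← h0, h₁.2.2.2.1, h₂.2.2.2.1]
  rcases eq_or_lt_of_le hx.2 with h12 | h12
  · rw [h12, h₁.2.2.2.2.1, h₂.2.2.2.2.1]
  exact TWU.eq_on_open h₁ h₂ ⟨h0, h12⟩
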